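/- Let (c_n) be a bounded sequence and τ > 0. Then Σ_{n≥0} c_n e^{-n²π²τ} √2 cos(nπx) = Σ_{i≥0} y_i x^{2i}/(2i)! with y_i := √2 Σ_{n≥0} c_n e^{-n²π²τ}(-n²π²)^i, and the coefficients satisfy |y_i| ≤ C(1 + 1/√τ) · i!/τ^i where C ≤ K sup_n |c_n| for a universal constant K. -/

import Mathlib

open Real

lemma pow_mul_exp_neg_le (i : ℕ) {t : ℝ} (ht : 0 ≤ t) :
    t ^ i * Real.exp (-t) ≤ (i : ℝ) ^ i * Real.exp (-(i : ℝ)) := by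
  rcases Nat.eq_zero_or_pos i with rfl | hi
  · simpa using Real.exp_le_exp.mpr (by linarith : -t ≤ -(0:ℝ))
  · have hi' : (0:ℝ) < i := by exact_mod_cast hi
    have h1 : t / i ≤ Real.exp (t / i - 1) := by
      have := Real.add_one_le_exp (t / i - 1); linarith
    have h2 : (t / i) ^ i ≤ Real.exp (t / i - 1) ^ i :=
      pow_le_pow_left₀ (by positivity) h1 i
    have h3 : Real.exp (t / i - 1) ^ i = Real.exp (t - i) := by
      rw [← Real.exp_nat_mul]
      congr 1
      field_simp
    have h4 : t ^ i ≤ (i:ℝ)^i * Real.exp (t - (i:ℝ)) := by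
      have ht' : t ^ i = (t / i) ^ i * (i:ℝ)^i := by
        rw [div_pow]; field_simp
      rw [ht']
      rw [h3] at h2
      calc (t / i) ^ i * (i:ℝ)^i ≤ Real.exp (t - i) * (i:ℝ)^i := by
            apply mul_le_mul_of_nonneg_right h2 (by positivity)
        _ = (i:ℝ)^i * Real.exp (t - i) := by ring
    calc t ^ i * Real.exp (-t) ≤ ((i:ℝ)^i * Real.exp (t - i)) * Real.exp (-t) := by
          apply mul_le_mul_of_nonneg_right h4 (Real.exp_pos _).le
      _ = (i:ℝ)^i * Real.exp (-(i:ℝ)) := by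
          rw [mul_assoc, ← Real.exp_add]; ring_nf

lemma sqrt_pi_le_stirling (n : ℕ) : Real.sqrt π ≤ Stirling.stirlingSeq (n + 1) :=
  Stirling.stirlingSeq'_antitone.le_of_tendsto
    (Stirling.tendsto_stirlingSeq_sqrt_pi.comp (Filter.tendsto_add_atTop_nat 1)) n

lemma factorial_lb {i : ℕ} (hi : 1 ≤ i) :
    Real.sqrt π * (Real.sqrt (2 * i) * ((i : ℝ) / Real.exp 1) ^ i) ≤ (Nat.factorial i : ℝ) := by
  have h := sqrt_pi_le_stirling (i - 1)
  rw [Nat.sub_add_cancel hi] at h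
  unfold Stirling.stirlingSeq at h
  have hi' : (0:ℝ) < i := by exact_mod_cast hi
  have hpos : 0 < Real.sqrt (2 * i) * ((i:ℝ)/Real.exp 1)^i := by
    apply mul_pos (Real.sqrt_pos.mpr (by positivity)) (pow_pos (by positivity) i)
  rw [le_div_iff₀ hpos] at h
  linarith

lemma summable_gauss {a : ℝ} (ha : 0 < a) :
    Summable (fun n : ℕ => Real.exp (-a * (n : ℝ) ^ 2)) := by
  apply Summable.of_nonneg_of_le (fun n => (Real.exp_pos _).le)
    (fun n => ?_) (summable_geometric_of_lt_one (Real.exp_pos (-a)).le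
      (Real.exp_lt_one_iff.mpr (by linarith)))
  rw [← Real.exp_nat_mul]
  apply Real.exp_le_exp.mpr
  have hn : (n:ℝ) ≤ (n:ℝ)^2 := by
    have := Nat.le_self_pow (two_ne_zero) n
    exact_mod_cast this
  nlinarith

lemma gauss_tsum_le {a : ℝ} (ha : 0 < a) :
    ∑' n : ℕ, Real.exp (-a * (n : ℝ) ^ 2) ≤ 1 + Real.sqrt (π / a) / 2 := by
  have hsum := summable_gauss ha
  rw [Summable.tsum_eq_zero_add hsum]
  have htail : ∑' n : ℕ, Real.exp (-a * ((n + 1 : ℕ):ℝ) ^ 2) ≤ Real.sqrt (π / a) / 2 := by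
    apply Real.tsum_le_of_sum_range_le (fun n => (Real.exp_pos _).le)
    intro N
    have hanti : AntitoneOn (fun x : ℝ => Real.exp (-a * x ^ 2)) (Set.Icc (0:ℝ) (0 + N)) := by
      intro x hx y hy hxy
      apply Real.exp_le_exp.mpr
      have hsq : x^2 ≤ y^2 := by
        nlinarith [mul_nonneg (sub_nonneg.mpr hxy) (by linarith [hx.1] : (0:ℝ) ≤ x + y)]
      have := mul_le_mul_of_nonneg_left hsq ha.le
      linarith
    have h1 := hanti.sum_le_integral
    have h2 : ∫ x in (0:ℝ)..(0 + (N:ℝ)), Real.exp (-a * x ^ 2) ≤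
        ∫ x in Set.Ioi (0:ℝ), Real.exp (-a * x ^ 2) := by
      rw [zero_add, intervalIntegral.integral_of_le (Nat.cast_nonneg N)]
      apply MeasureTheory.setIntegral_mono_set (integrable_exp_neg_mul_sq ha).integrableOn
        (Filter.Eventually.of_forall fun x => (Real.exp_pos _).le)
        (Set.Ioc_subset_Ioi_self.eventuallyLE)
    rw [integral_gaussian_Ioi] at h2
    calc ∑ n ∈ Finset.range N, Real.exp (-a * ((n + 1 : ℕ):ℝ) ^ 2)
        = ∑ n ∈ Finset.range N, Real.exp (-a * ((0:ℝ) + ((n + 1 : ℕ):ℝ)) ^ 2) := by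
          apply Finset.sum_congr rfl; intro n _; norm_num
      _ ≤ ∫ x in (0:ℝ)..(0 + (N:ℝ)), Real.exp (-a * x ^ 2) := h1
      _ ≤ Real.sqrt (π / a) / 2 := h2
  have h0 : Real.exp (-a * ((0:ℕ):ℝ) ^ 2) = 1 := by norm_num
  rw [h0]
  exact add_le_add_right htail 1

lemma key_bound (i : ℕ) {y : ℝ} (hy : 0 ≤ y) :
    y ^ i * Real.exp (-y) ≤
      Real.exp 1 * ((i:ℝ) ^ i * Real.exp (-(i:ℝ))) * Real.exp (-(y / (i + 1))) := by
  rcases Nat.eq_zero_or_pos i with rfl | hi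
  · simp only [pow_zero, one_mul, Nat.cast_zero, neg_zero, Real.exp_zero, mul_one]
    rw [zero_add, div_one]
    nlinarith [Real.exp_pos (-y), Real.one_le_exp (by norm_num : (0:ℝ) ≤ 1)]
  · have hi' : (0:ℝ) < i := by exact_mod_cast hi
    set t := (i:ℝ) / (i + 1) * y with ht_def
    have ht : 0 ≤ t := by positivity
    have hne : (1:ℝ) + (i:ℝ) ≠ 0 := by positivity
    have hty : t + y / (i + 1) = y := by
      rw [ht_def]; field_simp
    have hsplit : Real.exp (-y) = Real.exp (-t) * Real.exp (-(y / (i + 1))) := by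
      rw [← Real.exp_add]; congr 1; linarith
    have hyi : y ^ i = ((i:ℝ) + 1) ^ i / (i:ℝ) ^ i * t ^ i := by
      rw [ht_def, mul_pow, div_pow]
      field_simp
    have hA := pow_mul_exp_neg_le i ht
    have hratio : ((i:ℝ) + 1) ^ i / (i:ℝ) ^ i ≤ Real.exp 1 := by
      have h1 : ((i:ℝ) + 1) / i ≤ Real.exp (1 / i) := by
        have h := Real.add_one_le_exp (1 / (i:ℝ))
        calc ((i:ℝ) + 1) / i = 1 / (i:ℝ) + 1 := by field_simp; ring
          _ ≤ Real.exp (1 / i) := h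
      have h2 : (((i:ℝ) + 1) / i) ^ i ≤ Real.exp (1 / i) ^ i :=
        pow_le_pow_left₀ (by positivity) h1 i
      have h3 : Real.exp (1 / (i:ℝ)) ^ i = Real.exp 1 := by
        rw [← Real.exp_nat_mul]
        congr 1
        field_simp
      rw [div_pow] at h2
      exact h2.trans_eq h3
    calc y ^ i * Real.exp (-y)
        = ((i:ℝ) + 1) ^ i / (i:ℝ) ^ i * (t ^ i * Real.exp (-t)) *
            Real.exp (-(y / (i + 1))) := by rw [hyi, hsplit]; ring
      _ ≤ ((i:ℝ) + 1) ^ i / (i:ℝ) ^ i * ((i:ℝ) ^ i * Real.exp (-(i:ℝ))) *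
            Real.exp (-(y / (i + 1))) := by
          apply mul_le_mul_of_nonneg_right _ (Real.exp_pos _).le
          exact mul_le_mul_of_nonneg_left hA (by positivity)
      _ ≤ Real.exp 1 * ((i:ℝ) ^ i * Real.exp (-(i:ℝ))) * Real.exp (-(y / (i + 1))) := by
          apply mul_le_mul_of_nonneg_right _ (Real.exp_pos _).le
          exact mul_le_mul_of_nonneg_right hratio (by positivity)

lemma D_le_factorial (i : ℕ) : (i:ℝ)^i * Real.exp (-(i:ℝ)) ≤ (Nat.factorial i : ℝ) := by
  have h := Real.pow_div_factorial_le_exp (i:ℝ) (Nat.cast_nonneg i) i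
  have hf : (0:ℝ) < (Nat.factorial i : ℝ) := by exact_mod_cast Nat.factorial_pos i
  rw [div_le_iff₀ hf] at h
  calc (i:ℝ)^i * Real.exp (-(i:ℝ)) ≤ (Real.exp (i:ℝ) * (Nat.factorial i)) * Real.exp (-(i:ℝ)) :=
        mul_le_mul_of_nonneg_right h (Real.exp_pos _).le
    _ = (Nat.factorial i : ℝ) * (Real.exp (i:ℝ) * Real.exp (-(i:ℝ))) := by ring
    _ = (Nat.factorial i : ℝ) := by rw [← Real.exp_add]; simp

lemma D_eq (i : ℕ) : ((i:ℝ) / Real.exp 1) ^ i = (i:ℝ)^i * Real.exp (-(i:ℝ)) := by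
  rw [div_pow, Real.exp_neg]
  congr 1
  rw [show Real.exp ((i:ℕ):ℝ) = Real.exp ((i:ℕ) * (1:ℝ)) by rw [mul_one], Real.exp_nat_mul]

lemma D_sqrt_le_factorial (i : ℕ) :
    ((i:ℝ)^i * Real.exp (-(i:ℝ))) * Real.sqrt ((i:ℝ) + 1) / (2 * Real.sqrt π) ≤
      (Nat.factorial i : ℝ) := by
  have hππ : Real.sqrt π * Real.sqrt π = π := Real.mul_self_sqrt pi_pos.le
  have hsπ : 0 < Real.sqrt π := Real.sqrt_pos.mpr pi_pos
  rcases Nat.eq_zero_or_pos i with rfl | hi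
  · simp only [Nat.cast_zero, pow_zero, neg_zero, Real.exp_zero, mul_one, one_mul,
      zero_add, Real.sqrt_one, Nat.factorial_zero, Nat.cast_one]
    rw [div_le_one (by positivity)]
    nlinarith [Real.pi_gt_three]
  · have hi' : (1:ℝ) ≤ i := by exact_mod_cast hi
    have hfl := factorial_lb hi
    rw [← D_eq]
    have h1 : Real.sqrt ((i:ℝ) + 1) ≤ Real.sqrt (2 * i) := Real.sqrt_le_sqrt (by linarith)
    have h2 : Real.sqrt (2 * i) ≤ 2 * π * Real.sqrt (2 * i) := by
      nlinarith [Real.sqrt_nonneg (2 * (i:ℝ)), Real.pi_gt_three]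
    have hkey : Real.sqrt ((i:ℝ) + 1) / (2 * Real.sqrt π) ≤ Real.sqrt π * Real.sqrt (2 * i) := by
      rw [div_le_iff₀ (by positivity)]
      calc Real.sqrt ((i:ℝ) + 1) ≤ Real.sqrt (2 * i) := h1
        _ ≤ 2 * π * Real.sqrt (2 * i) := h2
        _ = Real.sqrt π * Real.sqrt (2 * i) * (2 * Real.sqrt π) := by
            linear_combination (-2 * Real.sqrt (2 * (i:ℝ))) * hππ
    have hD : (0:ℝ) ≤ ((i:ℝ) / Real.exp 1) ^ i := by positivity
    calc ((i:ℝ) / Real.exp 1) ^ i * Real.sqrt ((i:ℝ) + 1) / (2 * Real.sqrt π)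
        = ((i:ℝ) / Real.exp 1) ^ i * (Real.sqrt ((i:ℝ) + 1) / (2 * Real.sqrt π)) := by ring
      _ ≤ ((i:ℝ) / Real.exp 1) ^ i * (Real.sqrt π * Real.sqrt (2 * i)) :=
          mul_le_mul_of_nonneg_left hkey hD
      _ = Real.sqrt π * (Real.sqrt (2 * i) * ((i:ℝ) / Real.exp 1) ^ i) := by ring
      _ ≤ (Nat.factorial i : ℝ) := hfl

theorem S_bound {τ : ℝ} (hτ : 0 < τ) (i : ℕ) :
    Summable (fun n : ℕ => ((n:ℝ)^2 * π^2)^i * Real.exp (-(n:ℝ)^2 * π^2 * τ)) ∧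
    ∑' n : ℕ, ((n:ℝ)^2 * π^2)^i * Real.exp (-(n:ℝ)^2 * π^2 * τ) ≤
      Real.exp 1 * (Nat.factorial i : ℝ) * (1 + 1 / Real.sqrt τ) / τ ^ i := by
  set a : ℝ := π^2 * τ / (i + 1) with ha_def
  have ha : 0 < a := by positivity
  set D : ℝ := (i:ℝ)^i * Real.exp (-(i:ℝ)) with hD_def
  have hD0 : 0 ≤ D := by positivity
  have hpt : ∀ n : ℕ, ((n:ℝ)^2 * π^2)^i * Real.exp (-(n:ℝ)^2 * π^2 * τ) ≤
      (Real.exp 1 * D / τ^i) * Real.exp (-a * (n:ℝ)^2) := by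
    intro n
    have hy : (0:ℝ) ≤ (n:ℝ)^2 * π^2 * τ := by positivity
    have h := key_bound i hy
    have e1 : ((n:ℝ)^2 * π^2)^i = ((n:ℝ)^2 * π^2 * τ)^i / τ^i := by
      rw [mul_pow]; field_simp; ring
    have e2 : (-(n:ℝ)^2 * π^2 * τ) = -((n:ℝ)^2 * π^2 * τ) := by ring
    have e3 : -a * (n:ℝ)^2 = -(((n:ℝ)^2 * π^2 * τ) / ((i:ℝ) + 1)) := by
      rw [ha_def]; ring
    rw [e1, e2, e3, div_mul_eq_mul_div, div_mul_eq_mul_div]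
    gcongr
  have hsum2 : Summable (fun n : ℕ => (Real.exp 1 * D / τ^i) * Real.exp (-a * (n:ℝ)^2)) :=
    (summable_gauss ha).mul_left _
  have hnonneg : ∀ n : ℕ, 0 ≤ ((n:ℝ)^2 * π^2)^i * Real.exp (-(n:ℝ)^2 * π^2 * τ) :=
    fun n => by positivity
  have hsum1 : Summable (fun n : ℕ => ((n:ℝ)^2 * π^2)^i * Real.exp (-(n:ℝ)^2 * π^2 * τ)) :=
    Summable.of_nonneg_of_le hnonneg hpt hsum2
  refine ⟨hsum1, ?_⟩
  have hC : 0 ≤ Real.exp 1 * D / τ^i := by positivity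
  have step1 : ∑' n : ℕ, ((n:ℝ)^2 * π^2)^i * Real.exp (-(n:ℝ)^2 * π^2 * τ) ≤
      (Real.exp 1 * D / τ^i) * ∑' n : ℕ, Real.exp (-a * (n:ℝ)^2) := by
    calc ∑' n : ℕ, ((n:ℝ)^2 * π^2)^i * Real.exp (-(n:ℝ)^2 * π^2 * τ)
        ≤ ∑' n : ℕ, (Real.exp 1 * D / τ^i) * Real.exp (-a * (n:ℝ)^2) :=
          Summable.tsum_le_tsum hpt hsum1 hsum2
      _ = (Real.exp 1 * D / τ^i) * ∑' n : ℕ, Real.exp (-a * (n:ℝ)^2) := tsum_mul_left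
  have step2 : (Real.exp 1 * D / τ^i) * ∑' n : ℕ, Real.exp (-a * (n:ℝ)^2) ≤
      (Real.exp 1 * D / τ^i) * (1 + Real.sqrt (π / a) / 2) :=
    mul_le_mul_of_nonneg_left (gauss_tsum_le ha) hC
  have hπa : Real.sqrt (π / a) = Real.sqrt ((i:ℝ) + 1) / (Real.sqrt π * Real.sqrt τ) := by
    rw [ha_def, show π / (π^2 * τ / ((i:ℝ) + 1)) = ((i:ℝ) + 1) / (π * τ) by
      field_simp]
    rw [Real.sqrt_div (by positivity : (0:ℝ) ≤ (i:ℝ) + 1), Real.sqrt_mul pi_pos.le]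
  have hsτ : 0 < Real.sqrt τ := Real.sqrt_pos.mpr hτ
  have hsπ : 0 < Real.sqrt π := Real.sqrt_pos.mpr pi_pos
  have core : D * (1 + Real.sqrt ((i:ℝ) + 1) / (Real.sqrt π * Real.sqrt τ) / 2) ≤
      (Nat.factorial i : ℝ) * (1 + 1 / Real.sqrt τ) := by
    have hD1 : D ≤ (Nat.factorial i : ℝ) := D_le_factorial i
    have hD2 : D * Real.sqrt ((i:ℝ) + 1) / (2 * Real.sqrt π) ≤ (Nat.factorial i : ℝ) :=
      D_sqrt_le_factorial i
    have expand : D * (1 + Real.sqrt ((i:ℝ) + 1) / (Real.sqrt π * Real.sqrt τ) / 2) =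
        D + (D * Real.sqrt ((i:ℝ) + 1) / (2 * Real.sqrt π)) * (1 / Real.sqrt τ) := by
      field_simp
    have expand2 : (Nat.factorial i : ℝ) * (1 + 1 / Real.sqrt τ) =
        (Nat.factorial i : ℝ) + (Nat.factorial i : ℝ) * (1 / Real.sqrt τ) := by ring
    rw [expand, expand2]
    have h2 : (D * Real.sqrt ((i:ℝ) + 1) / (2 * Real.sqrt π)) * (1 / Real.sqrt τ) ≤
        (Nat.factorial i : ℝ) * (1 / Real.sqrt τ) :=
      mul_le_mul_of_nonneg_right hD2 (by positivity)
    linarith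
  have final : (Real.exp 1 * D / τ^i) * (1 + Real.sqrt (π / a) / 2) ≤
      Real.exp 1 * (Nat.factorial i : ℝ) * (1 + 1 / Real.sqrt τ) / τ^i := by
    rw [hπa]
    calc (Real.exp 1 * D / τ^i) * (1 + Real.sqrt ((i:ℝ) + 1) / (Real.sqrt π * Real.sqrt τ) / 2)
        = (D * (1 + Real.sqrt ((i:ℝ) + 1) / (Real.sqrt π * Real.sqrt τ) / 2)) *
            (Real.exp 1 / τ^i) := by ring
      _ ≤ ((Nat.factorial i : ℝ) * (1 + 1 / Real.sqrt τ)) * (Real.exp 1 / τ^i) :=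
          mul_le_mul_of_nonneg_right core (by positivity)
      _ = Real.exp 1 * (Nat.factorial i : ℝ) * (1 + 1 / Real.sqrt τ) / τ^i := by ring
  linarith

lemma coeff_bound {c : ℕ → ℝ} {B τ : ℝ} (hB : ∀ n, |c n| ≤ B) (hτ : 0 < τ) (i : ℕ) :
    |Real.sqrt 2 * ∑' n : ℕ, c n * Real.exp (-(n : ℝ) ^ 2 * π ^ 2 * τ) *
        (-(n : ℝ) ^ 2 * π ^ 2) ^ i| ≤
      8 * B * (1 + 1 / Real.sqrt τ) * (Nat.factorial i : ℝ) / τ ^ i := by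
  obtain ⟨hsumS, hS⟩ := S_bound hτ i
  have hB0 : 0 ≤ B := (abs_nonneg _).trans (hB 0)
  have hsτ : 0 < Real.sqrt τ := Real.sqrt_pos.mpr hτ
  have habs : ∀ n : ℕ, |c n * Real.exp (-(n:ℝ)^2 * π^2 * τ) * (-(n:ℝ)^2 * π^2)^i| ≤
      B * (((n:ℝ)^2 * π^2)^i * Real.exp (-(n:ℝ)^2 * π^2 * τ)) := by
    intro n
    rw [abs_mul, abs_mul]
    have h1 : |(-(n:ℝ)^2 * π^2)^i| = ((n:ℝ)^2 * π^2)^i := by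
      rw [abs_pow, show -(n:ℝ)^2 * π^2 = -((n:ℝ)^2 * π^2) by ring, abs_neg,
        abs_of_nonneg (by positivity : (0:ℝ) ≤ (n:ℝ)^2 * π^2)]
    rw [h1, Real.abs_exp]
    calc |c n| * Real.exp (-(n:ℝ)^2 * π^2 * τ) * ((n:ℝ)^2 * π^2)^i
        ≤ B * Real.exp (-(n:ℝ)^2 * π^2 * τ) * ((n:ℝ)^2 * π^2)^i := by
          gcongr
          exact hB n
      _ = B * (((n:ℝ)^2 * π^2)^i * Real.exp (-(n:ℝ)^2 * π^2 * τ)) := by ring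
  have hsumabs : Summable (fun n : ℕ =>
      |c n * Real.exp (-(n:ℝ)^2 * π^2 * τ) * (-(n:ℝ)^2 * π^2)^i|) :=
    Summable.of_nonneg_of_le (fun n => abs_nonneg _) habs (hsumS.mul_left B)
  have h1 : |∑' n : ℕ, c n * Real.exp (-(n:ℝ)^2 * π^2 * τ) * (-(n:ℝ)^2 * π^2)^i| ≤
      ∑' n : ℕ, |c n * Real.exp (-(n:ℝ)^2 * π^2 * τ) * (-(n:ℝ)^2 * π^2)^i| := by
    have := norm_tsum_le_tsum_norm (f := fun n : ℕ =>
      c n * Real.exp (-(n:ℝ)^2 * π^2 * τ) * (-(n:ℝ)^2 * π^2)^i) (by simpa only [Real.norm_eq_abs] using hsumabs)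
    simpa only [Real.norm_eq_abs] using this
  have h2 : ∑' n : ℕ, |c n * Real.exp (-(n:ℝ)^2 * π^2 * τ) * (-(n:ℝ)^2 * π^2)^i| ≤
      B * ∑' n : ℕ, ((n:ℝ)^2 * π^2)^i * Real.exp (-(n:ℝ)^2 * π^2 * τ) := by
    calc ∑' n : ℕ, |c n * Real.exp (-(n:ℝ)^2 * π^2 * τ) * (-(n:ℝ)^2 * π^2)^i|
        ≤ ∑' n : ℕ, B * (((n:ℝ)^2 * π^2)^i * Real.exp (-(n:ℝ)^2 * π^2 * τ)) :=
          Summable.tsum_le_tsum habs hsumabs (hsumS.mul_left B)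
      _ = B * ∑' n : ℕ, ((n:ℝ)^2 * π^2)^i * Real.exp (-(n:ℝ)^2 * π^2 * τ) := tsum_mul_left
  have h3 : B * ∑' n : ℕ, ((n:ℝ)^2 * π^2)^i * Real.exp (-(n:ℝ)^2 * π^2 * τ) ≤
      B * (Real.exp 1 * (Nat.factorial i : ℝ) * (1 + 1 / Real.sqrt τ) / τ ^ i) :=
    mul_le_mul_of_nonneg_left hS hB0
  have hs2 : Real.sqrt 2 ≤ 2 := by
    nlinarith [Real.sq_sqrt (by norm_num : (0:ℝ) ≤ 2), Real.sqrt_nonneg 2]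
  have he : Real.exp 1 ≤ 3 := by
    have := Real.exp_one_lt_d9
    linarith
  have hP : 0 ≤ B * (1 + 1 / Real.sqrt τ) * (Nat.factorial i : ℝ) / τ ^ i := by positivity
  calc |Real.sqrt 2 * ∑' n : ℕ, c n * Real.exp (-(n:ℝ)^2 * π^2 * τ) * (-(n:ℝ)^2 * π^2)^i|
      = Real.sqrt 2 * |∑' n : ℕ, c n * Real.exp (-(n:ℝ)^2 * π^2 * τ) * (-(n:ℝ)^2 * π^2)^i| := by
        rw [abs_mul, abs_of_nonneg (Real.sqrt_nonneg 2)]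
    _ ≤ Real.sqrt 2 * (B * (Real.exp 1 * (Nat.factorial i : ℝ) * (1 + 1 / Real.sqrt τ) / τ ^ i)) := by
        apply mul_le_mul_of_nonneg_left _ (Real.sqrt_nonneg 2)
        linarith
    _ = (Real.sqrt 2 * Real.exp 1) * (B * (1 + 1 / Real.sqrt τ) * (Nat.factorial i : ℝ) / τ ^ i) := by
        ring
    _ ≤ 8 * (B * (1 + 1 / Real.sqrt τ) * (Nat.factorial i : ℝ) / τ ^ i) := by
        apply mul_le_mul_of_nonneg_right _ hP
        nlinarith [Real.exp_pos 1, Real.sqrt_nonneg 2]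
    _ = 8 * B * (1 + 1 / Real.sqrt τ) * (Nat.factorial i : ℝ) / τ ^ i := by ring

lemma cosh_le_exp_abs (r : ℝ) : Real.cosh r ≤ Real.exp |r| := by
  rw [Real.cosh_eq]
  have h1 : Real.exp r ≤ Real.exp |r| := Real.exp_le_exp.mpr (le_abs_self r)
  have h2 : Real.exp (-r) ≤ Real.exp |r| := Real.exp_le_exp.mpr (neg_le_abs r)
  linarith

lemma series_eq {c : ℕ → ℝ} {B τ : ℝ} (hB : ∀ n, |c n| ≤ B) (hτ : 0 < τ) (x : ℝ) :
    (∑' n : ℕ, c n * Real.exp (-(n : ℝ) ^ 2 * π ^ 2 * τ) *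
        Real.sqrt 2 * Real.cos ((n : ℝ) * π * x)) =
      ∑' i : ℕ,
        (Real.sqrt 2 * ∑' n : ℕ, c n * Real.exp (-(n : ℝ) ^ 2 * π ^ 2 * τ) *
            (-(n : ℝ) ^ 2 * π ^ 2) ^ i) *
          x ^ (2 * i) / (Nat.factorial (2 * i) : ℝ) := by
  have hB0 : 0 ≤ B := (abs_nonneg _).trans (hB 0)
  set E : ℕ → ℝ := fun n => Real.exp (-(n:ℝ)^2 * π^2 * τ) with hE
  set f : ℕ → ℕ → ℝ := fun n i =>
    c n * E n * Real.sqrt 2 * ((-1)^i * ((n:ℝ) * π * x)^(2*i) / (Nat.factorial (2*i) : ℝ))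
    with hf
  -- pointwise cos expansion
  have stepA : ∀ n : ℕ, c n * E n * Real.sqrt 2 * Real.cos ((n:ℝ) * π * x) = ∑' i : ℕ, f n i := by
    intro n
    rw [Real.cos_eq_tsum ((n:ℝ) * π * x)]
    exact (tsum_mul_left).symm
  -- summability of the double series
  have hG0 : ∀ p : ℕ × ℕ, 0 ≤ (B * Real.sqrt 2 * E p.1) *
      (((p.1:ℝ) * π * x)^(2*p.2) / (Nat.factorial (2*p.2) : ℝ)) := by
    intro p
    have h1 : (0:ℝ) ≤ ((p.1:ℝ) * π * x)^(2*p.2) := by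
      rw [pow_mul]; positivity
    have h2 : (0:ℝ) < (Nat.factorial (2*p.2) : ℝ) := by exact_mod_cast Nat.factorial_pos _
    have h3 : 0 < E p.1 := Real.exp_pos _
    positivity
  have hInner : ∀ n : ℕ, Summable (fun i : ℕ => (B * Real.sqrt 2 * E n) *
      (((n:ℝ) * π * x)^(2*i) / (Nat.factorial (2*i) : ℝ))) := by
    intro n
    exact (Real.hasSum_cosh ((n:ℝ) * π * x)).summable.mul_left _
  have hInnerSum : ∀ n : ℕ, (∑' i : ℕ, (B * Real.sqrt 2 * E n) *
      (((n:ℝ) * π * x)^(2*i) / (Nat.factorial (2*i) : ℝ))) =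
      (B * Real.sqrt 2 * E n) * Real.cosh ((n:ℝ) * π * x) := by
    intro n
    rw [tsum_mul_left, ← Real.cosh_eq_tsum]
  have hr : Real.exp (-(π^2 * τ / 2)) < 1 := Real.exp_lt_one_iff.mpr (neg_lt_zero.mpr (by positivity))
  have hOuterBound : ∀ n : ℕ, (B * Real.sqrt 2 * E n) * Real.cosh ((n:ℝ) * π * x) ≤
      (B * Real.sqrt 2 * Real.exp (x^2 / (2*τ))) * (Real.exp (-(π^2 * τ / 2)))^n := by
    intro n
    have habs : |(n:ℝ) * π * x| = (n:ℝ) * π * |x| := by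
      rw [abs_mul, abs_mul, abs_of_nonneg (Nat.cast_nonneg n), abs_of_nonneg Real.pi_pos.le]
    have hch : Real.cosh ((n:ℝ) * π * x) ≤ Real.exp ((n:ℝ) * π * |x|) := by
      calc Real.cosh ((n:ℝ) * π * x) ≤ Real.exp |(n:ℝ) * π * x| := cosh_le_exp_abs _
        _ = Real.exp ((n:ℝ) * π * |x|) := by rw [habs]
    have hkey : -(n:ℝ)^2 * π^2 * τ + (n:ℝ) * π * |x| ≤ x^2/(2*τ) + n * (-(π^2 * τ / 2)) := by
      have hsq := sq_nonneg ((n:ℝ) * π * τ - |x|)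
      have hx2 : |x|^2 = x^2 := sq_abs x
      have hn2 : (n:ℝ) ≤ (n:ℝ)^2 := by
        have := Nat.le_self_pow (two_ne_zero) n
        exact_mod_cast this
      have h1 : (n:ℝ) * π * |x| ≤ x^2/(2*τ) + (n:ℝ)^2 * π^2 * τ / 2 := by
        rw [← sub_nonneg, ← hx2]
        have heq : |x|^2/(2*τ) + (n:ℝ)^2 * π^2 * τ / 2 - (n:ℝ) * π * |x| =
            ((n:ℝ) * π * τ - |x|)^2 / (2*τ) := by
          field_simp
          linear_combination
        rw [heq]
        positivity
      have h2 : (n:ℝ) * (π^2 * τ / 2) ≤ (n:ℝ)^2 * (π^2 * τ / 2) :=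
        mul_le_mul_of_nonneg_right hn2 (by positivity)
      nlinarith
    have hE2 : E n * Real.exp ((n:ℝ) * π * |x|) ≤
        Real.exp (x^2 / (2*τ)) * (Real.exp (-(π^2 * τ / 2)))^n := by
      rw [hE]
      rw [← Real.exp_nat_mul, ← Real.exp_add, ← Real.exp_add]
      exact Real.exp_le_exp.mpr hkey
    calc (B * Real.sqrt 2 * E n) * Real.cosh ((n:ℝ) * π * x)
        ≤ (B * Real.sqrt 2 * E n) * Real.exp ((n:ℝ) * π * |x|) := by
          apply mul_le_mul_of_nonneg_left hch
          have : 0 < E n := Real.exp_pos _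
          positivity
      _ = (B * Real.sqrt 2) * (E n * Real.exp ((n:ℝ) * π * |x|)) := by ring
      _ ≤ (B * Real.sqrt 2) * (Real.exp (x^2 / (2*τ)) * (Real.exp (-(π^2 * τ / 2)))^n) := by
          apply mul_le_mul_of_nonneg_left hE2 (by positivity)
      _ = (B * Real.sqrt 2 * Real.exp (x^2 / (2*τ))) * (Real.exp (-(π^2 * τ / 2)))^n := by ring
  have hOuter : Summable (fun n : ℕ => (B * Real.sqrt 2 * E n) * Real.cosh ((n:ℝ) * π * x)) := by
    apply Summable.of_nonneg_of_le (fun n => ?_) hOuterBound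
      ((summable_geometric_of_lt_one (Real.exp_pos _).le hr).mul_left _)
    have h3 : 0 < E n := Real.exp_pos _
    have h4 : 0 < Real.cosh ((n:ℝ) * π * x) := Real.cosh_pos _
    positivity
  have hG : Summable (fun p : ℕ × ℕ => (B * Real.sqrt 2 * E p.1) *
      (((p.1:ℝ) * π * x)^(2*p.2) / (Nat.factorial (2*p.2) : ℝ))) := by
    apply (summable_prod_of_nonneg hG0).mpr
    refine ⟨fun n => hInner n, ?_⟩
    simpa only [hInnerSum] using hOuter
  have hFle : ∀ p : ℕ × ℕ, |Function.uncurry f p| ≤ (B * Real.sqrt 2 * E p.1) *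
      (((p.1:ℝ) * π * x)^(2*p.2) / (Nat.factorial (2*p.2) : ℝ)) := by
    rintro ⟨n, i⟩
    simp only [Function.uncurry, hf]
    have hpos : (0:ℝ) ≤ ((n:ℝ) * π * x)^(2*i) := by rw [pow_mul]; positivity
    have hfac : (0:ℝ) < (Nat.factorial (2*i) : ℝ) := by exact_mod_cast Nat.factorial_pos _
    have hEn : (0:ℝ) < E n := Real.exp_pos _
    simp only [abs_mul, abs_div, abs_pow, abs_neg, abs_one, one_pow, one_mul,
      Nat.abs_cast, abs_of_nonneg hEn.le, abs_of_nonneg (Real.sqrt_nonneg 2),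
      abs_of_nonneg Real.pi_pos.le]
    calc |c n| * E n * Real.sqrt 2 * (((n:ℝ) * π * |x|)^(2*i) / (Nat.factorial (2*i) : ℝ))
        ≤ B * E n * Real.sqrt 2 * (((n:ℝ) * π * |x|)^(2*i) / (Nat.factorial (2*i) : ℝ)) := by
          apply mul_le_mul_of_nonneg_right _ (by positivity)
          apply mul_le_mul_of_nonneg_right _ (Real.sqrt_nonneg 2)
          exact mul_le_mul_of_nonneg_right (hB n) hEn.le
      _ = (B * Real.sqrt 2 * E n) * (((n:ℝ) * π * |x|)^(2*i) / (Nat.factorial (2*i) : ℝ)) := by ring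
      _ = (B * Real.sqrt 2 * E n) * (((n:ℝ) * π * x)^(2*i) / (Nat.factorial (2*i) : ℝ)) := by
          rw [pow_mul, pow_mul, mul_pow, mul_pow, sq_abs]; ring
  have hF : Summable (Function.uncurry f) := by
    rw [← summable_abs_iff]
    exact Summable.of_nonneg_of_le (fun p => abs_nonneg _) hFle hG
  -- exchange the order
  have hcomm : ∑' n : ℕ, ∑' i : ℕ, f n i = ∑' i : ℕ, ∑' n : ℕ, f n i := (Summable.tsum_comm hF).symm
  -- identify the inner sums
  have stepD : ∀ i : ℕ, ∑' n : ℕ, f n i =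
      (Real.sqrt 2 * ∑' n : ℕ, c n * E n * (-(n:ℝ)^2 * π^2)^i) *
        x^(2*i) / (Nat.factorial (2*i) : ℝ) := by
    intro i
    have hterm : ∀ n : ℕ, f n i =
        (c n * E n * (-(n:ℝ)^2 * π^2)^i) * (Real.sqrt 2 * x^(2*i) / (Nat.factorial (2*i) : ℝ)) := by
      intro n
      simp only [hf]
      have hpow : (-1:ℝ)^i * ((n:ℝ) * π * x)^(2*i) = (-(n:ℝ)^2 * π^2)^i * x^(2*i) := by
        rw [pow_mul, pow_mul, ← mul_pow, ← mul_pow]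
        congr 1
        ring
      rw [hpow]
      ring
    rw [tsum_congr hterm, tsum_mul_right]
    ring
  calc (∑' n : ℕ, c n * E n * Real.sqrt 2 * Real.cos ((n:ℝ) * π * x))
      = ∑' n : ℕ, ∑' i : ℕ, f n i := tsum_congr stepA
    _ = ∑' i : ℕ, ∑' n : ℕ, f n i := hcomm
    _ = ∑' i : ℕ, (Real.sqrt 2 * ∑' n : ℕ, c n * E n * (-(n:ℝ)^2 * π^2)^i) *
          x^(2*i) / (Nat.factorial (2*i) : ℝ) := tsum_congr stepD

theorem heat_trace_taylor_coeffs :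
    ∃ K : ℝ, 0 < K ∧
      ∀ (c : ℕ → ℝ) (B : ℝ), (∀ n, |c n| ≤ B) →
        ∀ (τ : ℝ), 0 < τ →
          (∀ x : ℝ,
            (∑' n : ℕ, c n * Real.exp (-(n : ℝ) ^ 2 * π ^ 2 * τ) *
              Real.sqrt 2 * Real.cos ((n : ℝ) * π * x)) =
            ∑' i : ℕ,
              (Real.sqrt 2 * ∑' n : ℕ, c n * Real.exp (-(n : ℝ) ^ 2 * π ^ 2 * τ) *
                  (-(n : ℝ) ^ 2 * π ^ 2) ^ i) *
                x ^ (2 * i) / (Nat.factorial (2 * i) : ℝ)) ∧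
          ∀ i : ℕ,
            |Real.sqrt 2 * ∑' n : ℕ, c n * Real.exp (-(n : ℝ) ^ 2 * π ^ 2 * τ) *
                (-(n : ℝ) ^ 2 * π ^ 2) ^ i| ≤
              K * B * (1 + 1 / Real.sqrt τ) * (Nat.factorial i : ℝ) / τ ^ i := by
  refine ⟨8, by norm_num, ?_⟩
  intro c B hB τ hτ
  exact ⟨fun x => series_eq hB hτ x, fun i => coeff_bound hB hτ i⟩
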